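/- Let B > 0. The range of the operator γ*γ is dense in L²([0,B]): the set of (a.e.-equivalence classes of) functions of the form ξ ↦ ∫₀^B ϑ₁(ξ,x)·f(x) dx, where f ranges over L²([0,B]) and ϑ₁(ξ,x) = ξx·min(ξ,x) − (ξ+x)·min(ξ,x)²/2 + min(ξ,x)³/3, is dense in L²([0,B]). -/

import Mathlib

open MeasureTheory Set

noncomputable def kk (ξ x : ℝ) : ℝ :=
  ξ * x * min ξ x - (ξ + x) * (min ξ x) ^ 2 / 2 + (min ξ x) ^ 3 / 3

noncomputable def pp (ξ t : ℝ) : ℝ := max (ξ - t) 0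

lemma kk_symm (ξ x : ℝ) : kk ξ x = kk x ξ := by
  unfold kk; rw [min_comm]; ring

lemma kk_cont : Continuous (fun q : ℝ × ℝ => kk q.1 q.2) := by
  unfold kk; fun_prop

lemma pp_cont : Continuous (fun q : ℝ × ℝ => pp q.1 q.2) := by
  unfold pp; fun_prop

lemma pp_nonneg (ξ t : ℝ) : 0 ≤ pp ξ t := le_max_right _ _

lemma pp_le {B ξ t : ℝ} (hξ : ξ ∈ Icc 0 B) (ht : 0 ≤ t) : pp ξ t ≤ B := by
  unfold pp
  rcases max_cases (ξ - t) 0 with ⟨h, _⟩ | ⟨h, _⟩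
  · rw [h]; linarith [hξ.2]
  · rw [h]; linarith [hξ.1, hξ.2]

lemma kk_bound {B : ℝ} (hB : 0 ≤ B) {ξ x : ℝ} (hx : x ∈ Icc 0 B) :
    |kk ξ x| ≤ 3 * (|ξ| + B) ^ 3 := by
  obtain ⟨r, hr⟩ : ∃ r, r = |ξ| + B := ⟨_, rfl⟩
  rw [← hr]
  have hxr : |x| ≤ r := by rw [abs_of_nonneg hx.1]; have := abs_nonneg ξ; linarith [hx.2]
  have hξr : |ξ| ≤ r := by linarith
  have hmr : |min ξ x| ≤ r := by
    rcases min_cases ξ x with ⟨h, _⟩ | ⟨h, _⟩ <;> rw [h] <;> assumption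
  have hr0 : 0 ≤ r := le_trans (abs_nonneg ξ) hξr
  unfold kk
  have h1 : |ξ * x * min ξ x| ≤ r ^ 3 := by
    rw [abs_mul, abs_mul]
    calc |ξ| * |x| * |min ξ x| ≤ r * r * r := by
          gcongr <;> positivity
      _ = r ^ 3 := by ring
  have h2 : |(ξ + x) * (min ξ x) ^ 2 / 2| ≤ r ^ 3 := by
    rw [abs_div, abs_mul, abs_pow]
    have : |ξ + x| ≤ 2 * r := by
      calc |ξ + x| ≤ |ξ| + |x| := abs_add_le _ _
        _ ≤ 2 * r := by linarith
    calc |ξ + x| * |min ξ x| ^ 2 / |(2:ℝ)| ≤ 2 * r * r ^ 2 / 2 := by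
          rw [abs_two]; gcongr <;> positivity
      _ = r ^ 3 := by ring
  have h3 : |(min ξ x) ^ 3 / 3| ≤ r ^ 3 := by
    rw [abs_div, abs_pow]
    calc |min ξ x| ^ 3 / |(3:ℝ)| ≤ r ^ 3 / 3 := by
          rw [abs_of_nonneg (by norm_num : (0:ℝ) ≤ 3)]; gcongr
      _ ≤ r ^ 3 := by nlinarith [pow_nonneg hr0 3]
  calc |ξ * x * min ξ x - (ξ + x) * (min ξ x) ^ 2 / 2 + (min ξ x) ^ 3 / 3|
      ≤ |ξ * x * min ξ x - (ξ + x) * (min ξ x) ^ 2 / 2| + |(min ξ x) ^ 3 / 3| := abs_add_le _ _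
    _ ≤ (|ξ * x * min ξ x| + |(ξ + x) * (min ξ x) ^ 2 / 2|) + |(min ξ x) ^ 3 / 3| := by
        gcongr; exact abs_sub _ _
    _ ≤ 3 * r ^ 3 := by linarith

lemma pp_cont1 (ξ : ℝ) : Continuous (fun t : ℝ => pp ξ t) := by
  unfold pp; fun_prop

lemma ppmul_intble (ξ x a b : ℝ) :
    IntervalIntegrable (fun t => pp ξ t * pp x t) volume a b :=
  ((pp_cont1 ξ).mul (pp_cont1 x)).intervalIntegrable a b

lemma kk_eq_integral_aux {B ξ x : ℝ} (hξ : ξ ∈ Icc 0 B) (hx : x ∈ Icc 0 B) (hξx : ξ ≤ x) :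
    kk ξ x = ∫ t in (0:ℝ)..B, pp ξ t * pp x t := by
  have hξB : ξ ≤ B := hξ.2
  have hξ0 : 0 ≤ ξ := hξ.1
  have hsplit := intervalIntegral.integral_add_adjacent_intervals
    (ppmul_intble ξ x 0 ξ) (ppmul_intble ξ x ξ B)
  rw [← hsplit]
  have h2 : (∫ t in ξ..B, pp ξ t * pp x t) = 0 := by
    have : EqOn (fun t => pp ξ t * pp x t) (fun _ => (0:ℝ)) (uIcc ξ B) := by
      intro t ht
      rw [uIcc_of_le hξB] at ht
      have : pp ξ t = 0 := by
        unfold pp; exact max_eq_right (by linarith [ht.1])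
      simp [this]
    rw [intervalIntegral.integral_congr this, intervalIntegral.integral_const, smul_zero]
  have h1 : (∫ t in (0:ℝ)..ξ, pp ξ t * pp x t) = kk ξ x := by
    have hcongr : EqOn (fun t => pp ξ t * pp x t) (fun t => (ξ - t) * (x - t)) (uIcc 0 ξ) := by
      intro t ht
      rw [uIcc_of_le hξ0] at ht
      have e1 : pp ξ t = ξ - t := max_eq_left (by linarith [ht.2])
      have e2 : pp x t = x - t := max_eq_left (by linarith [ht.2, hξx])
      simp [e1, e2]
    rw [intervalIntegral.integral_congr hcongr]
    have hderiv : ∀ t ∈ uIcc (0:ℝ) ξ,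
        HasDerivAt (fun t => ξ * x * t - (ξ + x) * t ^ 2 / 2 + t ^ 3 / 3)
          ((ξ - t) * (x - t)) t := by
      intro t _
      have : HasDerivAt (fun t => ξ * x * t - (ξ + x) * t ^ 2 / 2 + t ^ 3 / 3)
          (ξ * x * 1 - (ξ + x) * ((2:ℕ) * t ^ (2-1)) / 2 + (3:ℕ) * t ^ (3-1) / 3) t := by
        apply HasDerivAt.add
        apply HasDerivAt.sub
        · exact (hasDerivAt_id t).const_mul (ξ * x)
        · exact ((hasDerivAt_pow 2 t).const_mul (ξ + x)).div_const 2
        · exact (hasDerivAt_pow 3 t).div_const 3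
      convert this using 1
      push_cast
      ring
    rw [intervalIntegral.integral_eq_sub_of_hasDerivAt hderiv
      (((continuous_const.sub continuous_id).mul
        (continuous_const.sub continuous_id)).intervalIntegrable 0 ξ)]
    unfold kk
    rw [min_eq_left hξx]
    ring
  rw [h1, h2, add_zero]

lemma kk_eq_integral {B ξ x : ℝ} (hξ : ξ ∈ Icc 0 B) (hx : x ∈ Icc 0 B) :
    kk ξ x = ∫ t in (0:ℝ)..B, pp ξ t * pp x t := by
  rcases le_total ξ x with h | h
  · exact kk_eq_integral_aux hξ hx h
  · rw [kk_symm, kk_eq_integral_aux hx hξ h]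
    congr 1; ext t; ring

lemma kk_cont1 (x : ℝ) : Continuous (fun ξ : ℝ => kk ξ x) :=
  kk_cont.comp (continuous_id.prodMk continuous_const)

lemma kk_cont2 (ξ : ℝ) : Continuous (fun x : ℝ => kk ξ x) :=
  kk_cont.comp (continuous_const.prodMk continuous_id)

lemma finB (B : ℝ) : IsFiniteMeasure (volume.restrict (Icc (0:ℝ) B)) :=
  ⟨by rw [Measure.restrict_apply_univ]; exact measure_Icc_lt_top⟩

lemma L2integrable {B : ℝ} (f : Lp ℝ 2 (volume.restrict (Icc (0:ℝ) B))) :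
    Integrable (f : ℝ → ℝ) (volume.restrict (Icc (0:ℝ) B)) := by
  haveI := finB B
  exact MemLp.integrable one_le_two (Lp.memLp f)
section OpDef
variable (B : ℝ)

noncomputable def Tfun (f : ℝ → ℝ) (ξ : ℝ) : ℝ :=
  ∫ x, kk ξ x * f x ∂(volume.restrict (Icc (0:ℝ) B))

variable {B}

lemma T_integrand_integrable (hB : 0 ≤ B) {f : ℝ → ℝ}
    (hf : Integrable f (volume.restrict (Icc (0:ℝ) B))) (ξ : ℝ) :
    Integrable (fun x => kk ξ x * f x) (volume.restrict (Icc (0:ℝ) B)) := by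
  apply Integrable.mono' (hf.norm.const_mul (3 * (|ξ| + B) ^ 3))
  · exact ((kk_cont2 ξ).aestronglyMeasurable).mul hf.aestronglyMeasurable
  · filter_upwards [ae_restrict_mem measurableSet_Icc] with x hx
    rw [norm_mul]
    gcongr
    exact kk_bound hB hx

lemma Tfun_continuous (hB : 0 ≤ B) {f : ℝ → ℝ}
    (hf : Integrable f (volume.restrict (Icc (0:ℝ) B))) :
    Continuous (Tfun B f) := by
  rw [continuous_iff_continuousAt]
  intro ξ₀
  have hbound : ∀ᶠ ξ in nhds ξ₀, ∀ᵐ x ∂(volume.restrict (Icc (0:ℝ) B)),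
      ‖kk ξ x * f x‖ ≤ 3 * (|ξ₀| + 1 + B) ^ 3 * ‖f x‖ := by
    have : ∀ᶠ ξ in nhds ξ₀, |ξ| ≤ |ξ₀| + 1 := by
      have : ∀ᶠ ξ in nhds ξ₀, dist ξ ξ₀ ≤ 1 :=
        Metric.eventually_nhds_iff.2 ⟨1, one_pos, fun {x} h => le_of_lt (by simpa using h)⟩
      filter_upwards [this] with ξ h
      have := abs_sub_abs_le_abs_sub ξ ξ₀
      rw [Real.dist_eq] at h; linarith
    filter_upwards [this] with ξ hξ
    filter_upwards [ae_restrict_mem measurableSet_Icc] with x hx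
    rw [norm_mul]
    gcongr
    calc |kk ξ x| ≤ 3 * (|ξ| + B) ^ 3 := kk_bound hB hx
      _ ≤ 3 * (|ξ₀| + 1 + B) ^ 3 := by
          have := pow_le_pow_left₀ (by positivity : (0:ℝ) ≤ |ξ| + B)
            (by linarith : |ξ| + B ≤ |ξ₀| + 1 + B) 3
          linarith
  apply tendsto_integral_filter_of_dominated_convergence _ _ hbound
  · exact (hf.norm.const_mul _)
  · apply Filter.Eventually.of_forall
    intro x
    exact ((kk_cont1 x).mul continuous_const).continuousAt.tendsto
  · apply Filter.Eventually.of_forall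
    intro ξ
    exact ((kk_cont2 ξ).aestronglyMeasurable).mul hf.aestronglyMeasurable

lemma Tfun_bound (hB : 0 ≤ B) {f : ℝ → ℝ}
    (hf : Integrable f (volume.restrict (Icc (0:ℝ) B))) {ξ : ℝ} (hξ : ξ ∈ Icc 0 B) :
    |Tfun B f ξ| ≤ 3 * (2 * B) ^ 3 * ∫ x, ‖f x‖ ∂(volume.restrict (Icc (0:ℝ) B)) := by
  calc |Tfun B f ξ| = ‖Tfun B f ξ‖ := (Real.norm_eq_abs _).symm
    _ ≤ ∫ x, ‖kk ξ x * f x‖ ∂(volume.restrict (Icc (0:ℝ) B)) :=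
        norm_integral_le_integral_norm _
    _ ≤ ∫ x, 3 * (2 * B) ^ 3 * ‖f x‖ ∂(volume.restrict (Icc (0:ℝ) B)) := by
        apply integral_mono_of_nonneg (Filter.Eventually.of_forall fun x => norm_nonneg _)
          (hf.norm.const_mul _)
        filter_upwards [ae_restrict_mem measurableSet_Icc] with x hx
        rw [norm_mul]
        gcongr
        calc |kk ξ x| ≤ 3 * (|ξ| + B) ^ 3 := kk_bound hB hx
          _ ≤ 3 * (2 * B) ^ 3 := by
              have h1 : |ξ| + B ≤ 2 * B := by rw [abs_of_nonneg hξ.1]; linarith [hξ.2]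
              have := pow_le_pow_left₀ (by positivity : (0:ℝ) ≤ |ξ| + B) h1 3
              linarith
    _ = 3 * (2 * B) ^ 3 * ∫ x, ‖f x‖ ∂(volume.restrict (Icc (0:ℝ) B)) := integral_const_mul _ _

lemma Tfun_memLp (hB : 0 ≤ B) {f : ℝ → ℝ}
    (hf : Integrable f (volume.restrict (Icc (0:ℝ) B))) :
    MemLp (Tfun B f) 2 (volume.restrict (Icc (0:ℝ) B)) := by
  haveI := finB B
  apply MemLp.of_bound ((Tfun_continuous hB hf).aestronglyMeasurable)
    (3 * (2 * B) ^ 3 * ∫ x, ‖f x‖ ∂(volume.restrict (Icc (0:ℝ) B)))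
  filter_upwards [ae_restrict_mem measurableSet_Icc] with ξ hξ
  exact Tfun_bound hB hf hξ

end OpDef
section HG
variable (B : ℝ)

noncomputable def hfun (g : ℝ → ℝ) (t : ℝ) : ℝ :=
  ∫ x, pp x t * g x ∂(volume.restrict (Icc (0:ℝ) B))

noncomputable def Gfun (g : ℝ → ℝ) (s : ℝ) : ℝ :=
  ∫ x in Ioi s, g x ∂(volume.restrict (Icc (0:ℝ) B))

variable {B}

lemma hfun_integrand_integrable {g : ℝ → ℝ}
    (hg : Integrable g (volume.restrict (Icc (0:ℝ) B))) (t : ℝ) :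
    Integrable (fun x => pp x t * g x) (volume.restrict (Icc (0:ℝ) B)) := by
  apply Integrable.mono' (hg.norm.const_mul (B + |t|))
  · exact ((pp_cont.comp (continuous_id.prodMk continuous_const)).aestronglyMeasurable).mul
      hg.aestronglyMeasurable
  · filter_upwards [ae_restrict_mem measurableSet_Icc] with x hx
    rw [norm_mul]
    gcongr
    have h0 : |pp x t| = pp x t := abs_of_nonneg (le_max_right _ _)
    rw [Real.norm_eq_abs, h0]
    unfold pp
    rcases max_cases (x - t) 0 with ⟨h, _⟩ | ⟨h, _⟩ <;> rw [h]
    · have := abs_sub_abs_le_abs_sub x t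
      have h2 := abs_nonneg t
      have h3 := neg_abs_le t
      rw [abs_of_nonneg hx.1] at *
      linarith [hx.2]
    · have h2 := abs_nonneg t
      have := hx.1.trans hx.2
      linarith

lemma hfun_lipschitz {g : ℝ → ℝ} (hg : Integrable g (volume.restrict (Icc (0:ℝ) B)))
    (t s : ℝ) :
    |hfun B g t - hfun B g s| ≤
      (∫ x, ‖g x‖ ∂(volume.restrict (Icc (0:ℝ) B))) * |t - s| := by
  have hsub : hfun B g t - hfun B g s
      = ∫ x, (pp x t - pp x s) * g x ∂(volume.restrict (Icc (0:ℝ) B)) := by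
    unfold hfun
    rw [← integral_sub (hfun_integrand_integrable hg t) (hfun_integrand_integrable hg s)]
    congr 1; ext x; ring
  rw [hsub]
  calc |∫ x, (pp x t - pp x s) * g x ∂(volume.restrict (Icc (0:ℝ) B))|
      = ‖∫ x, (pp x t - pp x s) * g x ∂(volume.restrict (Icc (0:ℝ) B))‖ :=
        (Real.norm_eq_abs _).symm
    _ ≤ ∫ x, ‖(pp x t - pp x s) * g x‖ ∂(volume.restrict (Icc (0:ℝ) B)) :=
        norm_integral_le_integral_norm _
    _ ≤ ∫ x, |t - s| * ‖g x‖ ∂(volume.restrict (Icc (0:ℝ) B)) := by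
        apply integral_mono_of_nonneg (Filter.Eventually.of_forall fun x => norm_nonneg _)
          (hg.norm.const_mul _)
        apply Filter.Eventually.of_forall
        intro x
        simp only []
        rw [norm_mul]
        gcongr
        rw [Real.norm_eq_abs]
        unfold pp
        calc |max (x - t) 0 - max (x - s) 0| ≤ |(x - t) - (x - s)| :=
              abs_max_sub_max_le_abs _ _ _
          _ = |s - t| := by ring_nf
          _ = |t - s| := abs_sub_comm _ _
    _ = (∫ x, ‖g x‖ ∂(volume.restrict (Icc (0:ℝ) B))) * |t - s| := by
        rw [integral_const_mul]; ring

lemma hfun_continuous {g : ℝ → ℝ} (hg : Integrable g (volume.restrict (Icc (0:ℝ) B))) :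
    Continuous (hfun B g) := by
  apply Metric.continuous_iff.2
  intro t ε hε
  set I := ∫ x, ‖g x‖ ∂(volume.restrict (Icc (0:ℝ) B)) with hI
  refine ⟨ε / (I + 1), by positivity, fun s hs => ?_⟩
  have hI0 : 0 ≤ I := integral_nonneg fun x => norm_nonneg _
  rw [Real.dist_eq]
  calc |hfun B g s - hfun B g t| ≤ I * |s - t| := hfun_lipschitz hg s t
    _ ≤ I * (ε / (I + 1)) := by
        gcongr
        rw [Real.dist_eq] at hs; exact le_of_lt hs
    _ < ε := by
        rw [div_eq_inv_mul]
        have : I * ((I + 1)⁻¹ * ε) = (I / (I + 1)) * ε := by ring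
        rw [this]
        have h1 : I / (I + 1) < 1 := by
          rw [div_lt_one (by linarith)]; linarith
        calc (I / (I + 1)) * ε < 1 * ε := by
              apply mul_lt_mul_of_pos_right h1 hε
          _ = ε := one_mul ε
    
lemma hfun_bound (hB : 0 ≤ B) {g : ℝ → ℝ}
    (hg : Integrable g (volume.restrict (Icc (0:ℝ) B))) {t : ℝ} (ht : 0 ≤ t) :
    |hfun B g t| ≤ B * ∫ x, ‖g x‖ ∂(volume.restrict (Icc (0:ℝ) B)) := by
  calc |hfun B g t| = ‖hfun B g t‖ := (Real.norm_eq_abs _).symm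
    _ ≤ ∫ x, ‖pp x t * g x‖ ∂(volume.restrict (Icc (0:ℝ) B)) :=
        norm_integral_le_integral_norm _
    _ ≤ ∫ x, B * ‖g x‖ ∂(volume.restrict (Icc (0:ℝ) B)) := by
        apply integral_mono_of_nonneg (Filter.Eventually.of_forall fun x => norm_nonneg _)
          (hg.norm.const_mul _)
        filter_upwards [ae_restrict_mem measurableSet_Icc] with x hx
        rw [norm_mul]
        gcongr
        rw [Real.norm_eq_abs, abs_of_nonneg (le_max_right _ _)]
        exact pp_le hx ht
    _ = B * ∫ x, ‖g x‖ ∂(volume.restrict (Icc (0:ℝ) B)) := integral_const_mul _ _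

lemma Gfun_bound {g : ℝ → ℝ} (hg : Integrable g (volume.restrict (Icc (0:ℝ) B))) (s : ℝ) :
    |Gfun B g s| ≤ ∫ x, ‖g x‖ ∂(volume.restrict (Icc (0:ℝ) B)) := by
  calc |Gfun B g s| = ‖Gfun B g s‖ := (Real.norm_eq_abs _).symm
    _ ≤ ∫ x in Ioi s, ‖g x‖ ∂(volume.restrict (Icc (0:ℝ) B)) :=
        norm_integral_le_integral_norm _
    _ ≤ ∫ x, ‖g x‖ ∂(volume.restrict (Icc (0:ℝ) B)) :=
        setIntegral_le_integral hg.norm (Filter.Eventually.of_forall fun x => norm_nonneg _)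

lemma Gfun_continuous {g : ℝ → ℝ} (hg : Integrable g (volume.restrict (Icc (0:ℝ) B))) :
    Continuous (Gfun B g) := by
  rw [continuous_iff_continuousAt]
  intro s₀
  have hae : ∀ᵐ x ∂(volume.restrict (Icc (0:ℝ) B)), x ≠ s₀ := by
    rw [ae_iff]
    apply measure_mono_null (fun x hx => show x ∈ ({s₀} : Set ℝ) by simpa using hx)
    rw [Measure.restrict_apply (measurableSet_singleton s₀)]
    exact measure_mono_null inter_subset_left (measure_singleton s₀)
  unfold Gfun
  have hrepr : ∀ s, (∫ x in Ioi s, g x ∂(volume.restrict (Icc (0:ℝ) B)))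
      = ∫ x, (Ioi s).indicator g x ∂(volume.restrict (Icc (0:ℝ) B)) := by
    intro s
    rw [integral_indicator measurableSet_Ioi]
  simp only [hrepr]
  apply tendsto_integral_filter_of_dominated_convergence (fun x => ‖g x‖)
  · apply Filter.Eventually.of_forall
    intro s
    exact hg.aestronglyMeasurable.indicator measurableSet_Ioi
  · apply Filter.Eventually.of_forall
    intro s
    apply Filter.Eventually.of_forall
    intro x
    exact norm_indicator_le_norm_self g x
  · exact hg.norm
  · filter_upwards [hae] with x hx
    rcases lt_or_gt_of_ne hx with h | h
    · -- x < s₀ : eventually indicator = 0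
      have : ∀ᶠ s in nhds s₀, (Ioi s).indicator g x = (Ioi s₀).indicator g x := by
        have hev : ∀ᶠ s in nhds s₀, x < s := eventually_gt_nhds h
        filter_upwards [hev] with s hs
        rw [indicator_of_notMem (by simpa using le_of_lt hs),
          indicator_of_notMem (by simpa using le_of_lt h)]
      exact Filter.Tendsto.congr' (Filter.EventuallyEq.symm this) tendsto_const_nhds
    · have : ∀ᶠ s in nhds s₀, (Ioi s).indicator g x = (Ioi s₀).indicator g x := by
        have hev : ∀ᶠ s in nhds s₀, s < x := eventually_lt_nhds h
        filter_upwards [hev] with s hs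
        rw [indicator_of_mem (by simpa using hs), indicator_of_mem (by simpa using h)]
      exact Filter.Tendsto.congr' (Filter.EventuallyEq.symm this) tendsto_const_nhds

end HG
section Fubini
variable {B : ℝ}

lemma intmu (hB : 0 ≤ B) (F : ℝ → ℝ) :
    ∫ x in (0:ℝ)..B, F x = ∫ x, F x ∂(volume.restrict (Icc (0:ℝ) B)) := by
  rw [intervalIntegral.integral_of_le hB]
  exact (integral_Icc_eq_integral_Ioc).symm

lemma kk_eq_muint (hB : 0 ≤ B) {ξ x : ℝ} (hξ : ξ ∈ Icc 0 B) (hx : x ∈ Icc 0 B) :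
    kk ξ x = ∫ t, pp ξ t * pp x t ∂(volume.restrict (Icc (0:ℝ) B)) := by
  rw [kk_eq_integral hξ hx, intmu hB]

lemma ae_prod_mem :
    ∀ᵐ z : ℝ × ℝ ∂((volume.restrict (Icc (0:ℝ) B)).prod (volume.restrict (Icc (0:ℝ) B))),
      z.1 ∈ Icc (0:ℝ) B ∧ z.2 ∈ Icc (0:ℝ) B := by
  rw [Measure.prod_restrict]
  filter_upwards [ae_restrict_mem (measurableSet_Icc.prod measurableSet_Icc)] with z hz
  exact ⟨hz.1, hz.2⟩

lemma inner_repr (hB : 0 ≤ B) {g : ℝ → ℝ}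
    (hg : Integrable g (volume.restrict (Icc (0:ℝ) B))) {ξ : ℝ} (hξ : ξ ∈ Icc 0 B) :
    Tfun B g ξ = ∫ t, pp ξ t * hfun B g t ∂(volume.restrict (Icc (0:ℝ) B)) := by
  haveI := finB B
  have hint : Integrable (Function.uncurry fun x t => pp ξ t * pp x t * g x)
      ((volume.restrict (Icc (0:ℝ) B)).prod (volume.restrict (Icc (0:ℝ) B))) := by
    apply Integrable.mono' (g := fun z : ℝ × ℝ => B * B * ‖g z.1‖ * 1)
      (((hg.norm.const_mul (B * B)).mul_prod (integrable_const 1)))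
    · have hcont : Continuous (fun z : ℝ × ℝ => pp ξ z.2 * pp z.1 z.2) :=
        ((pp_cont.comp (continuous_const.prodMk continuous_snd)).mul
          (pp_cont.comp (continuous_fst.prodMk continuous_snd)))
      have : (Function.uncurry fun x t => pp ξ t * pp x t * g x)
          = fun z : ℝ × ℝ => (pp ξ z.2 * pp z.1 z.2) * g z.1 := rfl
      rw [this]
      exact hcont.aestronglyMeasurable.mul hg.aestronglyMeasurable.comp_fst
    · filter_upwards [ae_prod_mem] with z hz
      have h1 : 0 ≤ B := hz.1.1.trans hz.1.2
      show ‖pp ξ z.2 * pp z.1 z.2 * g z.1‖ ≤ B * B * ‖g z.1‖ * 1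
      rw [mul_one, norm_mul, norm_mul]
      have e1 : ‖pp ξ z.2‖ ≤ B := by
        rw [Real.norm_eq_abs, abs_of_nonneg (pp_nonneg _ _)]; exact pp_le hξ hz.2.1
      have e2 : ‖pp z.1 z.2‖ ≤ B := by
        rw [Real.norm_eq_abs, abs_of_nonneg (pp_nonneg _ _)]; exact pp_le hz.1 hz.2.1
      have step1 : ‖pp ξ z.2‖ * ‖pp z.1 z.2‖ ≤ B * B :=
        mul_le_mul e1 e2 (norm_nonneg _) ((norm_nonneg _).trans e1)
      exact mul_le_mul_of_nonneg_right step1 (norm_nonneg _)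
  unfold Tfun
  have h1 : ∀ᵐ x ∂(volume.restrict (Icc (0:ℝ) B)),
      kk ξ x * g x = ∫ t, pp ξ t * pp x t * g x ∂(volume.restrict (Icc (0:ℝ) B)) := by
    filter_upwards [ae_restrict_mem measurableSet_Icc] with x hx
    rw [kk_eq_muint hB hξ hx, ← integral_mul_const]
  rw [integral_congr_ae h1, integral_integral_swap hint]
  refine integral_congr_ae (Filter.Eventually.of_forall fun t => ?_)
  show (∫ x, pp ξ t * pp x t * g x ∂(volume.restrict (Icc (0:ℝ) B)))
      = pp ξ t * hfun B g t
  unfold hfun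
  rw [← integral_const_mul]
  congr 1; ext x; ring

lemma quad_repr (hB : 0 ≤ B) {g : ℝ → ℝ}
    (hg : Integrable g (volume.restrict (Icc (0:ℝ) B))) :
    ∫ ξ, Tfun B g ξ * g ξ ∂(volume.restrict (Icc (0:ℝ) B))
      = ∫ t, hfun B g t ^ 2 ∂(volume.restrict (Icc (0:ℝ) B)) := by
  haveI := finB B
  set M := ∫ x, ‖g x‖ ∂(volume.restrict (Icc (0:ℝ) B)) with hM
  have hM0 : 0 ≤ M := integral_nonneg fun x => norm_nonneg _
  have hint : Integrable (Function.uncurry fun ξ t => pp ξ t * hfun B g t * g ξ)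
      ((volume.restrict (Icc (0:ℝ) B)).prod (volume.restrict (Icc (0:ℝ) B))) := by
    apply Integrable.mono' (g := fun z : ℝ × ℝ => B * (B * M) * ‖g z.1‖ * 1)
      (((hg.norm.const_mul (B * (B * M))).mul_prod (integrable_const 1)))
    · have hcont : Continuous (fun z : ℝ × ℝ => pp z.1 z.2 * hfun B g z.2) :=
        (pp_cont.mul ((hfun_continuous hg).comp continuous_snd))
      have : (Function.uncurry fun ξ t => pp ξ t * hfun B g t * g ξ)
          = fun z : ℝ × ℝ => (pp z.1 z.2 * hfun B g z.2) * g z.1 := rfl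
      rw [this]
      exact hcont.aestronglyMeasurable.mul hg.aestronglyMeasurable.comp_fst
    · filter_upwards [ae_prod_mem] with z hz
      show ‖pp z.1 z.2 * hfun B g z.2 * g z.1‖ ≤ B * (B * M) * ‖g z.1‖ * 1
      rw [mul_one, norm_mul, norm_mul]
      have e1 : ‖pp z.1 z.2‖ ≤ B := by
        rw [Real.norm_eq_abs, abs_of_nonneg (pp_nonneg _ _)]; exact pp_le hz.1 hz.2.1
      have e2 : ‖hfun B g z.2‖ ≤ B * M := by
        rw [Real.norm_eq_abs]; exact hfun_bound hB hg hz.2.1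
      have step1 : ‖pp z.1 z.2‖ * ‖hfun B g z.2‖ ≤ B * (B * M) :=
        mul_le_mul e1 e2 (norm_nonneg _) ((norm_nonneg _).trans e1)
      exact mul_le_mul_of_nonneg_right step1 (norm_nonneg _)
  have h1 : ∀ᵐ ξ ∂(volume.restrict (Icc (0:ℝ) B)),
      Tfun B g ξ * g ξ
        = ∫ t, pp ξ t * hfun B g t * g ξ ∂(volume.restrict (Icc (0:ℝ) B)) := by
    filter_upwards [ae_restrict_mem measurableSet_Icc] with ξ hξ
    rw [inner_repr hB hg hξ, ← integral_mul_const]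
  rw [integral_congr_ae h1, integral_integral_swap hint]
  refine integral_congr_ae (Filter.Eventually.of_forall fun t => ?_)
  show (∫ ξ, pp ξ t * hfun B g t * g ξ ∂(volume.restrict (Icc (0:ℝ) B)))
      = hfun B g t ^ 2
  have e : (∫ ξ, pp ξ t * hfun B g t * g ξ ∂(volume.restrict (Icc (0:ℝ) B)))
      = hfun B g t * ∫ ξ, pp ξ t * g ξ ∂(volume.restrict (Icc (0:ℝ) B)) := by
    rw [← integral_const_mul]
    congr 1; ext ξ; ring
  rw [e]
  show hfun B g t * hfun B g t = hfun B g t ^ 2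
  ring

end Fubini
section Repr2
variable {B : ℝ}

lemma pp_eq_int (hB : 0 ≤ B) {x t : ℝ} (hx : x ∈ Icc 0 B) (ht : 0 ≤ t) :
    pp x t = ∫ s, (Ico t x).indicator (fun _ => (1:ℝ)) s ∂(volume.restrict (Icc (0:ℝ) B)) := by
  rw [integral_indicator_const (1:ℝ) measurableSet_Ico]
  rw [measureReal_def, Measure.restrict_apply measurableSet_Ico]
  rcases lt_or_ge t x with h | h
  · have hsub : Ico t x ∩ Icc 0 B = Ico t x := by
      apply inter_eq_left.2
      intro s hs
      exact ⟨ht.trans hs.1, le_of_lt (lt_of_lt_of_le hs.2 hx.2)⟩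
    rw [hsub, Real.volume_Ico, smul_eq_mul, mul_one, ENNReal.toReal_ofReal (show (0:ℝ) ≤ x - t by linarith)]
    unfold pp
    exact max_eq_left (show (0:ℝ) ≤ x - t by linarith)
  · have hsub : Ico t x = (∅ : Set ℝ) := Ico_eq_empty (not_lt.2 h)
    rw [hsub, empty_inter]
    simp only [measure_empty, ENNReal.toReal_zero, zero_smul]
    unfold pp
    exact max_eq_right (show x - t ≤ (0:ℝ) by linarith)

lemma hfun_repr (hB : 0 ≤ B) {g : ℝ → ℝ}
    (hg : Integrable g (volume.restrict (Icc (0:ℝ) B))) {t : ℝ} (ht : 0 ≤ t) :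
    hfun B g t = ∫ s, (Ici t).indicator (Gfun B g) s ∂(volume.restrict (Icc (0:ℝ) B)) := by
  haveI := finB B
  set S : Set (ℝ × ℝ) := {z : ℝ × ℝ | t ≤ z.2 ∧ z.2 < z.1} with hS
  have hSm : MeasurableSet S :=
    (measurableSet_le measurable_const measurable_snd).inter
      (measurableSet_lt measurable_snd measurable_fst)
  have huncurry : (Function.uncurry fun x s => (Ico t x).indicator (fun _ => (1:ℝ)) s * g x)
      = S.indicator (fun z => g z.1) := by
    funext z
    show (Ico t z.1).indicator (fun _ => (1:ℝ)) z.2 * g z.1 = S.indicator (fun z => g z.1) z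
    by_cases hz : t ≤ z.2 ∧ z.2 < z.1
    · rw [indicator_of_mem (Set.mem_Ico.2 hz), indicator_of_mem (show z ∈ S from hz), one_mul]
    · rw [indicator_of_notMem (fun hmem => hz (Set.mem_Ico.1 hmem)),
        indicator_of_notMem (show ¬ z ∈ S from hz), zero_mul]
  have hint : Integrable (Function.uncurry fun x s => (Ico t x).indicator (fun _ => (1:ℝ)) s * g x)
      ((volume.restrict (Icc (0:ℝ) B)).prod (volume.restrict (Icc (0:ℝ) B))) := by
    rw [huncurry]
    apply Integrable.mono' (g := fun z : ℝ × ℝ => ‖g z.1‖ * 1)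
      ((hg.norm.mul_prod (integrable_const 1)))
    · exact hg.aestronglyMeasurable.comp_fst.indicator hSm
    · apply Filter.Eventually.of_forall
      intro z
      rw [mul_one]
      exact norm_indicator_le_norm_self _ _
  have h1 : hfun B g t = ∫ x, ∫ s, (Ico t x).indicator (fun _ => (1:ℝ)) s * g x
      ∂(volume.restrict (Icc (0:ℝ) B)) ∂(volume.restrict (Icc (0:ℝ) B)) := by
    unfold hfun
    apply integral_congr_ae
    filter_upwards [ae_restrict_mem measurableSet_Icc] with x hx
    rw [pp_eq_int hB hx ht, ← integral_mul_const]
  rw [h1, integral_integral_swap hint]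
  refine integral_congr_ae (Filter.Eventually.of_forall fun s => ?_)
  show (∫ x, (Ico t x).indicator (fun _ => (1:ℝ)) s * g x ∂(volume.restrict (Icc (0:ℝ) B)))
      = (Ici t).indicator (Gfun B g) s
  by_cases hts : t ≤ s
  · rw [indicator_of_mem (Set.mem_Ici.2 hts)]
    unfold Gfun
    rw [← integral_indicator measurableSet_Ioi]
    apply integral_congr_ae
    apply Filter.Eventually.of_forall
    intro x
    show (Ico t x).indicator (fun _ => (1:ℝ)) s * g x = (Ioi s).indicator g x
    by_cases hsx : s < x
    · rw [indicator_of_mem (Set.mem_Ico.2 ⟨hts, hsx⟩), indicator_of_mem (Set.mem_Ioi.2 hsx),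
        one_mul]
    · rw [indicator_of_notMem (fun hmem => hsx (Set.mem_Ico.1 hmem).2),
        indicator_of_notMem (fun hmem => hsx (Set.mem_Ioi.1 hmem)), zero_mul]
  · rw [indicator_of_notMem (fun hmem => hts (Set.mem_Ici.1 hmem))]
    have : ∀ x, (Ico t x).indicator (fun _ => (1:ℝ)) s * g x = 0 := by
      intro x
      rw [indicator_of_notMem (fun hmem => hts (Set.mem_Ico.1 hmem).1), zero_mul]
    simp only [this, integral_zero]

end Repr2
section ZeroProp
variable {B : ℝ}

lemma cont_eqOn_zero (hB : 0 < B) {φ : ℝ → ℝ} (hφ : Continuous φ)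
    (h : φ =ᵐ[volume.restrict (Icc (0:ℝ) B)] 0) : EqOn φ 0 (Icc 0 B) :=
  Measure.eqOn_Icc_of_ae_eq volume (ne_of_lt hB) h hφ.continuousOn continuousOn_const

lemma hfun_eqOn_zero (hB : 0 < B) {g : ℝ → ℝ}
    (hg : Integrable g (volume.restrict (Icc (0:ℝ) B)))
    (hq : ∫ t, hfun B g t ^ 2 ∂(volume.restrict (Icc (0:ℝ) B)) = 0) :
    EqOn (hfun B g) 0 (Icc 0 B) := by
  have hint : Integrable (fun t => hfun B g t ^ 2) (volume.restrict (Icc (0:ℝ) B)) :=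
    ((hfun_continuous hg).pow 2).integrableOn_Icc
  have hsq : (fun t => hfun B g t ^ 2) =ᵐ[volume.restrict (Icc (0:ℝ) B)] 0 :=
    (integral_eq_zero_iff_of_nonneg (fun t => sq_nonneg _) hint).1 hq
  apply cont_eqOn_zero hB (hfun_continuous hg)
  filter_upwards [hsq] with t ht
  have h2 : hfun B g t ^ 2 = 0 := ht
  have := sq_eq_zero_iff.1 h2
  simpa using this

lemma Gfun_eqOn_zero (hB : 0 < B) {g : ℝ → ℝ}
    (hg : Integrable g (volume.restrict (Icc (0:ℝ) B)))
    (hh : EqOn (hfun B g) 0 (Icc 0 B)) : EqOn (Gfun B g) 0 (Icc 0 B) := by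
  haveI := finB B
  have hGc : Continuous (Gfun B g) := Gfun_continuous hg
  have hGint : Integrable (Gfun B g) (volume.restrict (Icc (0:ℝ) B)) :=
    hGc.integrableOn_Icc
  have hPsi : ∀ t ∈ Icc (0:ℝ) B,
      (∫ s in Ici t, Gfun B g s ∂(volume.restrict (Icc (0:ℝ) B))) = 0 := by
    intro t ht
    rw [← integral_indicator measurableSet_Ici, ← hfun_repr hB.le hg ht.1]
    exact hh ht
  have hIco : ∀ a b : ℝ, 0 ≤ a → a ≤ b → b ≤ B →
      (∫ s in Ico a b, Gfun B g s ∂(volume.restrict (Icc (0:ℝ) B))) = 0 := by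
    intro a b ha hab hbB
    have hdisj : Disjoint (Ico a b) (Ici b) :=
      Set.disjoint_left.2 fun x hx hx2 => absurd hx2 (not_le.2 hx.2)
    have hsplit : (∫ s in Ico a b ∪ Ici b, Gfun B g s ∂(volume.restrict (Icc (0:ℝ) B)))
        = (∫ s in Ico a b, Gfun B g s ∂(volume.restrict (Icc (0:ℝ) B)))
          + ∫ s in Ici b, Gfun B g s ∂(volume.restrict (Icc (0:ℝ) B)) :=
      setIntegral_union hdisj measurableSet_Ici hGint.integrableOn hGint.integrableOn
    rw [Ico_union_Ici_eq_Ici hab] at hsplit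
    have e1 := hPsi a ⟨ha, hab.trans hbB⟩
    have e2 := hPsi b ⟨ha.trans hab, hbB⟩
    rw [e1, e2] at hsplit
    linarith [hsplit]
  -- convert to volume interval integrals
  have hvol : ∀ a b : ℝ, 0 ≤ a → a ≤ b → b ≤ B →
      (∫ s in Ico a b, Gfun B g s) = 0 := by
    intro a b ha hab hbB
    have hsub : Ico a b ∩ Icc 0 B = Ico a b := by
      apply inter_eq_left.2
      intro s hs
      exact ⟨ha.trans hs.1, (le_of_lt hs.2).trans hbB⟩
    have := hIco a b ha hab hbB
    rwa [Measure.restrict_restrict measurableSet_Ico, hsub] at this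
  -- FTC
  have hF0 : ∀ u ∈ Icc (0:ℝ) B, (∫ s in (0:ℝ)..u, Gfun B g s) = 0 := by
    intro u hu
    rw [intervalIntegral.integral_of_le hu.1, ← setIntegral_congr_set Ico_ae_eq_Ioc]
    exact hvol 0 u le_rfl hu.1 hu.2
  have hG0 : ∀ t ∈ Ioo (0:ℝ) B, Gfun B g t = 0 := by
    intro t ht
    have hd1 : HasDerivAt (fun u => ∫ s in (0:ℝ)..u, Gfun B g s) (Gfun B g t) t :=
      (hGc.integral_hasStrictDerivAt 0 t).hasDerivAt
    have hev : (fun u => ∫ s in (0:ℝ)..u, Gfun B g s) =ᶠ[nhds t] (fun _ => (0:ℝ)) := by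
      filter_upwards [Ioo_mem_nhds ht.1 ht.2] with u hu
      exact hF0 u ⟨le_of_lt hu.1, le_of_lt hu.2⟩
    have hd2 : HasDerivAt (fun u => ∫ s in (0:ℝ)..u, Gfun B g s) 0 t :=
      (hasDerivAt_const t (0:ℝ)).congr_of_eventuallyEq hev
    exact hd1.unique hd2
  have hIoo : EqOn (Gfun B g) 0 (Ioo (0:ℝ) B) := fun t ht => hG0 t ht
  have hclosure : EqOn (Gfun B g) 0 (closure (Ioo (0:ℝ) B)) :=
    hIoo.closure hGc continuous_const
  rwa [closure_Ioo (ne_of_lt hB)] at hclosure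

lemma int_Ioc_zero (hB : 0 < B) {g : ℝ → ℝ}
    (hg : Integrable g (volume.restrict (Icc (0:ℝ) B)))
    (hG : EqOn (Gfun B g) 0 (Icc 0 B)) :
    ∀ a b : ℝ, 0 ≤ a → a ≤ b → b ≤ B → (∫ x in Ioc a b, g x) = 0 := by
  have hGvol : ∀ s ∈ Icc (0:ℝ) B, (∫ x in Ioc s B, g x) = Gfun B g s := by
    intro s hs
    unfold Gfun
    have hset : Ioi s ∩ Icc 0 B = Ioc s B := by
      ext x
      simp only [mem_inter_iff, mem_Ioi, mem_Icc, mem_Ioc]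
      constructor
      · rintro ⟨h1, _, h3⟩; exact ⟨h1, h3⟩
      · rintro ⟨h1, h2⟩; exact ⟨h1, hs.1.trans (le_of_lt h1), h2⟩
    rw [Measure.restrict_restrict measurableSet_Ioi, hset]
  intro a b ha hab hbB
  have hdisj : Disjoint (Ioc a b) (Ioc b B) := Set.Ioc_disjoint_Ioc_of_le le_rfl
  have hsplit : (∫ x in Ioc a b ∪ Ioc b B, g x)
      = (∫ x in Ioc a b, g x) + ∫ x in Ioc b B, g x := by
    apply setIntegral_union hdisj measurableSet_Ioc
    · exact MeasureTheory.IntegrableOn.mono_set hg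
        (fun x hx => ⟨ha.trans (le_of_lt hx.1), hx.2.trans hbB⟩)
    · exact MeasureTheory.IntegrableOn.mono_set hg
        (fun x hx => ⟨(ha.trans hab).trans (le_of_lt hx.1), hx.2⟩)
  rw [Ioc_union_Ioc_eq_Ioc hab hbB] at hsplit
  have e1 : (∫ x in Ioc a B, g x) = 0 := by
    rw [hGvol a ⟨ha, hab.trans hbB⟩]; exact hG ⟨ha, hab.trans hbB⟩
  have e2 : (∫ x in Ioc b B, g x) = 0 := by
    rw [hGvol b ⟨ha.trans hab, hbB⟩]; exact hG ⟨ha.trans hab, hbB⟩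
  rw [e1, e2] at hsplit
  linarith [hsplit]

end ZeroProp
section AEZero
variable {B : ℝ}

lemma g_ae_zero (hB : 0 < B) {g : ℝ → ℝ}
    (hg : Integrable g (volume.restrict (Icc (0:ℝ) B)))
    (hz : ∀ a b : ℝ, 0 ≤ a → a ≤ b → b ≤ B → (∫ x in Ioc a b, g x) = 0) :
    g =ᵐ[volume.restrict (Icc (0:ℝ) B)] 0 := by
  haveI := finB B
  set μ := volume.restrict (Icc (0:ℝ) B) with hμ
  have hgm : AEMeasurable g μ := hg.aemeasurable
  have hd1m : AEMeasurable (fun x => ENNReal.ofReal (g x)) μ :=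
    ENNReal.measurable_ofReal.comp_aemeasurable hgm
  have hd2m : AEMeasurable (fun x => ENNReal.ofReal (-g x)) μ :=
    ENNReal.measurable_ofReal.comp_aemeasurable hgm.neg
  -- finiteness of lintegrals
  have hbnd : ∀ (ν : Measure ℝ), Integrable g ν →
      (∫⁻ x, ENNReal.ofReal (g x) ∂ν ≠ ⊤) ∧ (∫⁻ x, ENNReal.ofReal (-g x) ∂ν ≠ ⊤) := by
    intro ν hν
    have h1 : ∀ x, ENNReal.ofReal (g x) ≤ ‖g x‖₊ := by
      intro x
      rw [← enorm_eq_nnnorm, ← ofReal_norm, Real.norm_eq_abs]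
      exact ENNReal.ofReal_le_ofReal (le_abs_self _)
    have h2 : ∀ x, ENNReal.ofReal (-g x) ≤ ‖g x‖₊ := by
      intro x
      rw [← enorm_eq_nnnorm, ← ofReal_norm, Real.norm_eq_abs]
      exact ENNReal.ofReal_le_ofReal (neg_le_abs _)
    have hfin : (∫⁻ x, (‖g x‖₊ : ENNReal) ∂ν) < ⊤ := hν.2
    exact ⟨ne_of_lt (lt_of_le_of_lt (lintegral_mono h1) hfin),
      ne_of_lt (lt_of_le_of_lt (lintegral_mono h2) hfin)⟩
  -- the two withDensity measures
  set ν₁ := μ.withDensity (fun x => ENNReal.ofReal (g x)) with hν₁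
  set ν₂ := μ.withDensity (fun x => ENNReal.ofReal (-g x)) with hν₂
  have hν₁fin : IsFiniteMeasure ν₁ := by
    constructor
    rw [hν₁, withDensity_apply _ MeasurableSet.univ, Measure.restrict_univ]
    exact lt_of_le_of_lt (le_of_eq rfl) (lt_top_iff_ne_top.2 (hbnd μ hg).1)
  have hν₂fin : IsFiniteMeasure ν₂ := by
    constructor
    rw [hν₂, withDensity_apply _ MeasurableSet.univ, Measure.restrict_univ]
    exact lt_of_le_of_lt (le_of_eq rfl) (lt_top_iff_ne_top.2 (hbnd μ hg).2)
  -- integral over arbitrary Ioc vanishes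
  have hz' : ∀ a b : ℝ, (∫ x, g x ∂(μ.restrict (Ioc a b))) = 0 := by
    intro a b
    have hrr : μ.restrict (Ioc a b) = volume.restrict (Ioc a b ∩ Icc 0 B) := by
      rw [hμ, Measure.restrict_restrict measurableSet_Ioc]
    set a' := max a 0 with ha'
    set b' := min b B with hb'
    have hae : (Ioc a b ∩ Icc 0 B : Set ℝ) =ᵐ[volume] (Ioc a' b' : Set ℝ) := by
      rw [MeasureTheory.ae_eq_set]
      constructor
      · refine measure_mono_null (fun x hx => ?_) (measure_singleton (0:ℝ))
        rcases hx with ⟨⟨⟨hx1, hx2⟩, hx3, hx4⟩, hx5⟩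
        simp only [mem_Ioc, not_and_or, not_lt, not_le, ha', hb'] at hx5
        simp only [mem_singleton_iff]
        rcases hx5 with h | h
        · have h6 : x ≤ a ∨ x ≤ 0 := by
            rcases le_max_iff.1 h with h' | h'
            · left; linarith
            · right; linarith
          rcases h6 with h' | h'
          · exfalso; linarith
          · exact le_antisymm h' hx3
        · exfalso
          have hxb : x ≤ b' := le_min hx2 hx4
          have : b' < x := h
          linarith
      · refine measure_mono_null (fun x hx => ?_) measure_empty
        rcases hx with ⟨⟨hx1, hx2⟩, hx5⟩
        exfalso
        apply hx5
        have h0x : 0 < x := lt_of_le_of_lt (le_max_right a 0) hx1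
        exact ⟨⟨lt_of_le_of_lt (le_max_left a 0) hx1, hx2.trans (min_le_left b B)⟩,
          le_of_lt h0x, hx2.trans (min_le_right b B)⟩
    rw [hrr, setIntegral_congr_set hae]
    rcases le_or_gt a' b' with h | h
    · exact hz a' b' (le_max_right a 0) h (min_le_right b B)
    · rw [Set.Ioc_eq_empty (not_lt.2 (le_of_lt h))]
      simp
  -- measures agree on Ioc
  have hIoc : ∀ a b : ℝ, a < b → ν₁ (Ioc a b) = ν₂ (Ioc a b) := by
    intro a b _
    have hgr : Integrable g (μ.restrict (Ioc a b)) := hg.integrableOn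
    have hkey := integral_eq_lintegral_pos_part_sub_lintegral_neg_part hgr
    rw [hz' a b] at hkey
    have hfin := hbnd (μ.restrict (Ioc a b)) hgr
    have htr : (∫⁻ x, ENNReal.ofReal (g x) ∂(μ.restrict (Ioc a b))).toReal
        = (∫⁻ x, ENNReal.ofReal (-g x) ∂(μ.restrict (Ioc a b))).toReal := by linarith
    have := (ENNReal.toReal_eq_toReal_iff' hfin.1 hfin.2).1 htr
    rw [hν₁, hν₂, withDensity_apply _ measurableSet_Ioc, withDensity_apply _ measurableSet_Ioc]
    exact this
  have hext : ν₁ = ν₂ := Measure.ext_of_Ioc ν₁ ν₂ hIoc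
  have hae : (fun x => ENNReal.ofReal (g x)) =ᵐ[μ] (fun x => ENNReal.ofReal (-g x)) := by
    rw [← withDensity_eq_iff hd1m hd2m (hbnd μ hg).1]
    exact hext
  filter_upwards [hae] with x hx
  show g x = 0
  rcases lt_trichotomy (g x) 0 with h | h | h
  · exfalso
    have h1 : ENNReal.ofReal (g x) = 0 := ENNReal.ofReal_eq_zero.2 (le_of_lt h)
    have h2 : 0 < ENNReal.ofReal (-g x) := ENNReal.ofReal_pos.2 (by linarith)
    rw [hx] at h1
    rw [h1] at h2
    exact lt_irrefl _ h2
  · exact h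
  · exfalso
    have h1 : ENNReal.ofReal (-g x) = 0 := ENNReal.ofReal_eq_zero.2 (by linarith)
    have h2 : 0 < ENNReal.ofReal (g x) := ENNReal.ofReal_pos.2 h
    rw [← hx] at h1
    rw [h1] at h2
    exact lt_irrefl _ h2

end AEZero
section Final

lemma Tfun_congr {B : ℝ} {f f' : ℝ → ℝ}
    (h : f =ᵐ[volume.restrict (Icc (0:ℝ) B)] f') : Tfun B f = Tfun B f' := by
  funext ξ
  refine integral_congr_ae (h.mono fun x hx => ?_)
  show kk ξ x * f x = kk ξ x * f' x
  rw [hx]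

lemma Tfun_add {B : ℝ} (hB : 0 ≤ B) {f f' : ℝ → ℝ}
    (hf : Integrable f (volume.restrict (Icc (0:ℝ) B)))
    (hf' : Integrable f' (volume.restrict (Icc (0:ℝ) B))) (ξ : ℝ) :
    Tfun B (f + f') ξ = Tfun B f ξ + Tfun B f' ξ := by
  unfold Tfun
  rw [← integral_add (T_integrand_integrable hB hf ξ) (T_integrand_integrable hB hf' ξ)]
  apply integral_congr_ae
  apply Filter.Eventually.of_forall
  intro x
  show kk ξ x * (f x + f' x) = kk ξ x * f x + kk ξ x * f' x
  ring

lemma Tfun_smul {B : ℝ} (c : ℝ) (f : ℝ → ℝ) (ξ : ℝ) :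
    Tfun B (c • f) ξ = c * Tfun B f ξ := by
  unfold Tfun
  rw [← integral_const_mul]
  apply integral_congr_ae
  apply Filter.Eventually.of_forall
  intro x
  show kk ξ x * (c * f x) = c * (kk ξ x * f x)
  ring

/-- The range of `γ*γ` is dense in `L²([0,B])`: the set of
(a.e. classes of) functions `ξ ↦ ∫₀^B ϑ₁(ξ,x) f(x) dx`, with `f` ranging over
`L²([0,B])` and `ϑ₁(ξ,x) = ξx min(ξ,x) − (ξ+x) min(ξ,x)²/2 + min(ξ,x)³/3`,
is dense in `L²([0,B])`. -/
theorem stmt_10 (B : ℝ) (hB : 0 < B) :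
    Dense {g : Lp ℝ 2 (volume.restrict (Icc (0:ℝ) B)) |
      ∃ f : Lp ℝ 2 (volume.restrict (Icc (0:ℝ) B)),
        (g : ℝ → ℝ) =ᵐ[volume.restrict (Icc (0:ℝ) B)]
          fun ξ => ∫ x in (0:ℝ)..B,
            (ξ * x * min ξ x - (ξ + x) * (min ξ x) ^ 2 / 2 + (min ξ x) ^ 3 / 3) * f x} := by
  haveI := finB B
  -- the submodule of elements a.e. equal to `Tfun B f`
  let K : Submodule ℝ (Lp ℝ 2 (volume.restrict (Icc (0:ℝ) B))) :=
    { carrier := {g : Lp ℝ 2 (volume.restrict (Icc (0:ℝ) B)) |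
        ∃ f : Lp ℝ 2 (volume.restrict (Icc (0:ℝ) B)),
          (g : ℝ → ℝ) =ᵐ[volume.restrict (Icc (0:ℝ) B)] Tfun B (f : ℝ → ℝ)}
      add_mem' := by
        rintro g₁ g₂ ⟨f₁, h₁⟩ ⟨f₂, h₂⟩
        refine ⟨f₁ + f₂, ?_⟩
        have hT : Tfun B ((f₁ + f₂ : Lp ℝ 2 (volume.restrict (Icc (0:ℝ) B))) : ℝ → ℝ)
            = Tfun B ((f₁ : ℝ → ℝ) + (f₂ : ℝ → ℝ)) := Tfun_congr (Lp.coeFn_add f₁ f₂)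
        filter_upwards [h₁, h₂, Lp.coeFn_add g₁ g₂] with ξ e₁ e₂ e₃
        rw [e₃, hT]
        show g₁ ξ + g₂ ξ = Tfun B ((f₁ : ℝ → ℝ) + (f₂ : ℝ → ℝ)) ξ
        rw [Tfun_add hB.le (L2integrable f₁) (L2integrable f₂) ξ, e₁, e₂]
      zero_mem' := by
        refine ⟨0, ?_⟩
        have hT : Tfun B ((0 : Lp ℝ 2 (volume.restrict (Icc (0:ℝ) B))) : ℝ → ℝ)
            = Tfun B (0 : ℝ → ℝ) := Tfun_congr (Lp.coeFn_zero ℝ 2 _)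
        have hz : ∀ ξ, Tfun B (0 : ℝ → ℝ) ξ = 0 := by
          intro ξ
          unfold Tfun
          simp
        filter_upwards [Lp.coeFn_zero ℝ 2 (volume.restrict (Icc (0:ℝ) B))] with ξ e
        rw [e, hT]
        exact (hz ξ).symm
      smul_mem' := by
        rintro c g ⟨f, h⟩
        refine ⟨c • f, ?_⟩
        have hT : Tfun B ((c • f : Lp ℝ 2 (volume.restrict (Icc (0:ℝ) B))) : ℝ → ℝ)
            = Tfun B (c • (f : ℝ → ℝ)) := Tfun_congr (Lp.coeFn_smul c f)
        filter_upwards [h, Lp.coeFn_smul c g] with ξ e₁ e₂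
        rw [e₂, hT]
        show c • (g : ℝ → ℝ) ξ = Tfun B (c • (f : ℝ → ℝ)) ξ
        rw [Tfun_smul c, e₁, smul_eq_mul] }
  have hfe : ∀ f : Lp ℝ 2 (volume.restrict (Icc (0:ℝ) B)),
      (fun ξ => ∫ x in (0:ℝ)..B,
          (ξ * x * min ξ x - (ξ + x) * (min ξ x) ^ 2 / 2 + (min ξ x) ^ 3 / 3) * (f : ℝ → ℝ) x)
        = Tfun B (f : ℝ → ℝ) := by
    intro f
    funext ξ
    exact intmu hB.le (fun x => kk ξ x * (f : ℝ → ℝ) x)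
  have hset : {g : Lp ℝ 2 (volume.restrict (Icc (0:ℝ) B)) |
      ∃ f : Lp ℝ 2 (volume.restrict (Icc (0:ℝ) B)),
        (g : ℝ → ℝ) =ᵐ[volume.restrict (Icc (0:ℝ) B)]
          fun ξ => ∫ x in (0:ℝ)..B,
            (ξ * x * min ξ x - (ξ + x) * (min ξ x) ^ 2 / 2 + (min ξ x) ^ 3 / 3) * f x}
      = (K : Set (Lp ℝ 2 (volume.restrict (Icc (0:ℝ) B)))) := by
    ext g
    constructor
    · rintro ⟨f, hf⟩
      exact ⟨f, by rwa [hfe f] at hf⟩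
    · rintro ⟨f, hf⟩
      exact ⟨f, by rw [hfe f]; exact hf⟩
  rw [hset, Submodule.dense_iff_topologicalClosure_eq_top,
    Submodule.topologicalClosure_eq_top_iff, Submodule.eq_bot_iff]
  intro g hgK
  have hgi : Integrable ((g : ℝ → ℝ)) (volume.restrict (Icc (0:ℝ) B)) := L2integrable g
  have horth : ∀ u ∈ K, inner ℝ u g = 0 :=
    fun u hu => (Submodule.mem_orthogonal K g).1 hgK u hu
  have hmem := Tfun_memLp hB.le hgi
  have huK : hmem.toLp (Tfun B (g : ℝ → ℝ)) ∈ K := ⟨g, MemLp.coeFn_toLp hmem⟩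
  have h0 : inner ℝ (hmem.toLp (Tfun B (g : ℝ → ℝ))) g = 0 := horth _ huK
  have h1 : inner ℝ (hmem.toLp (Tfun B (g : ℝ → ℝ))) g
      = ∫ ξ, Tfun B (g : ℝ → ℝ) ξ * (g : ℝ → ℝ) ξ ∂(volume.restrict (Icc (0:ℝ) B)) := by
    rw [MeasureTheory.L2.inner_def]
    apply integral_congr_ae
    filter_upwards [MemLp.coeFn_toLp hmem] with ξ e
    rw [RCLike.inner_apply, e]
    simp [starRingEnd_apply]
    ring
  have hq : ∫ t, hfun B (g : ℝ → ℝ) t ^ 2 ∂(volume.restrict (Icc (0:ℝ) B)) = 0 := by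
    rw [← quad_repr hB.le hgi, ← h1, h0]
  have h2 := hfun_eqOn_zero hB hgi hq
  have h3 := Gfun_eqOn_zero hB hgi h2
  have h4 := int_Ioc_zero hB hgi h3
  have h5 := g_ae_zero hB hgi (fun a b ha hab hbB => h4 a b ha hab hbB)
  exact Lp.eq_zero_iff_ae_eq_zero.2 h5

end Final
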